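/- Suppose the set of admissible curves for the data (z0, v0, zf, vf, t_f) is nonempty. Then there exists an admissible curve z* whose maximum curvature equals the infimum of the maximum curvature over all admissible curves for this data; that is, Problem (P) has a minimiser. -/

import Mathlib

open Set MeasureTheory Real

set_option maxHeartbeats 1000000
set_option synthInstance.maxHeartbeats 400000

noncomputable section

/-- Points of the Euclidean plane. -/
abbrev Pt : Type := EuclideanSpace ℝ (Fin 2)

/-- The point of the plane with coordinates `(x, y)`. -/
def pt (x y : ℝ) : Pt := (WithLp.equiv 2 (Fin 2 → ℝ)).symm ![x, y]

/-- Rotation of the plane by `π/2`. -/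
def J (v : Pt) : Pt := pt (-(v 1)) (v 0)

/-- `z`, with derivative `z'`, is an admissible curve on `[t1, t2]` for the oriented
endpoint data `(p0, u0)`, `(p1, u1)`: it is differentiable with Lipschitz (hence
continuous) derivative `z'`, has unit speed, and matches the endpoint data. -/
def AdmissibleOn (t1 t2 : ℝ) (p0 u0 p1 u1 : Pt) (z z' : ℝ → Pt) : Prop :=
  (∀ t ∈ Icc t1 t2, HasDerivWithinAt z (z' t) (Icc t1 t2) t) ∧
  (∃ K : NNReal, LipschitzOnWith K z' (Icc t1 t2)) ∧
  (∀ t ∈ Icc t1 t2, ‖z' t‖ = 1) ∧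
  z t1 = p0 ∧ z t2 = p1 ∧ z' t1 = u0 ∧ z' t2 = u1

/-- The maximum curvature of a unit-speed curve with derivative `z'` on the set `s`:
the least Lipschitz constant of `z'` on `s` (equivalently, the essential supremum
of the norm of the second derivative). -/
def maxCurvOn (s : Set ℝ) (z' : ℝ → Pt) : ℝ :=
  sInf {a : ℝ | 0 ≤ a ∧ LipschitzOnWith (Real.toNNReal a) z' s}

/-- The piece `[s1, s2]` of the unit-speed curve with derivative `z'` is a circular
arc of signed curvature `ω`: `z'' = ω • J z'` a.e. there. -/
def IsArcOn (z' : ℝ → Pt) (ω s1 s2 : ℝ) : Prop :=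
  ∀ᵐ t ∂volume, t ∈ Ioo s1 s2 → HasDerivAt z' (ω • J (z' t)) t

/-- The piece `[s1, s2]` of the unit-speed curve with derivative `z'` is a straight
line segment: `z'` is constant there. -/
def IsLineOn (z' : ℝ → Pt) (s1 s2 : ℝ) : Prop :=
  ∀ s ∈ Icc s1 s2, ∀ t ∈ Icc s1 s2, z' s = z' t

/-- The piece `[s1, s2]` is a full circular loop of curvature `a`: a circular arc of
signed curvature `±a` whose turning angle is a positive integer multiple of `2π`. -/
def IsFullLoopOn (z' : ℝ → Pt) (a s1 s2 : ℝ) : Prop :=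
  ∃ ω : ℝ, |ω| = a ∧ IsArcOn z' ω s1 s2 ∧ ∃ k : ℕ, 0 < k ∧ a * (s2 - s1) = 2 * π * k

section Aux

open Set

lemma maxCurvOn_mem {s : Set ℝ} {z' : ℝ → Pt} (h : ∃ K : NNReal, LipschitzOnWith K z' s) :
    0 ≤ maxCurvOn s z' ∧ LipschitzOnWith (Real.toNNReal (maxCurvOn s z')) z' s := by
  obtain ⟨K, hK⟩ := h
  set A : Set ℝ := {a : ℝ | 0 ≤ a ∧ LipschitzOnWith (Real.toNNReal a) z' s} with hA
  have hKA : (K : ℝ) ∈ A := ⟨K.2, by rwa [Real.toNNReal_coe]⟩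
  have hbdd : BddBelow A := ⟨0, fun a ha => ha.1⟩
  have h0 : 0 ≤ sInf A := le_csInf ⟨_, hKA⟩ fun a ha => ha.1
  have key : ∀ x ∈ s, ∀ y ∈ s, dist (z' x) (z' y) ≤ sInf A * dist x y := by
    intro x hx y hy
    have hall : ∀ a ∈ A, dist (z' x) (z' y) ≤ a * dist x y := by
      intro a ha
      have := (lipschitzOnWith_iff_dist_le_mul.1 ha.2) x hx y hy
      rwa [Real.coe_toNNReal a ha.1] at this
    rcases eq_or_lt_of_le (dist_nonneg : (0:ℝ) ≤ dist x y) with hd | hd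
    · have := hall _ hKA
      rw [← hd] at this ⊢
      simpa using this
    · have h1 : dist (z' x) (z' y) / dist x y ≤ sInf A :=
        le_csInf ⟨_, hKA⟩ fun a ha => (div_le_iff₀ hd).2 (hall a ha)
      exact (div_le_iff₀ hd).1 h1
  have hlip : LipschitzOnWith (Real.toNNReal (sInf A)) z' s := by
    rw [lipschitzOnWith_iff_dist_le_mul]
    intro x hx y hy
    rw [Real.coe_toNNReal _ h0]
    exact key x hx y hy
  exact ⟨h0, hlip⟩

end Aux

/-- Existence of minimisers, Proposition 1 of the paper.
If the set of admissible curves for the data `(z0, v0, zf, vf, t_f)` is nonempty, then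
there is an admissible curve whose maximum curvature is least among all admissible
curves for this data: Problem (P) has a minimiser. -/

theorem stmt0 (z0 v0 zf vf : Pt) (tf : ℝ) (htf : 0 < tf)
    (hv0 : ‖v0‖ = 1) (hvf : ‖vf‖ = 1)
    (hne : ∃ z z' : ℝ → Pt, AdmissibleOn 0 tf z0 v0 zf vf z z') :
    ∃ z z' : ℝ → Pt, AdmissibleOn 0 tf z0 v0 zf vf z z' ∧
      ∀ w w' : ℝ → Pt, AdmissibleOn 0 tf z0 v0 zf vf w w' →
        maxCurvOn (Icc 0 tf) z' ≤ maxCurvOn (Icc 0 tf) w' := by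
  classical
  set S : Set ℝ :=
    {c : ℝ | ∃ z z' : ℝ → Pt, AdmissibleOn 0 tf z0 v0 zf vf z z' ∧
        maxCurvOn (Icc 0 tf) z' = c} with hS
  obtain ⟨w0, w0', hw0⟩ := hne
  have hSne : S.Nonempty := ⟨_, w0, w0', hw0, rfl⟩
  have hSnonneg : ∀ c ∈ S, (0:ℝ) ≤ c := by
    rintro c ⟨z, z', hz, rfl⟩
    exact (maxCurvOn_mem hz.2.1).1
  have hSbdd : BddBelow S := ⟨0, hSnonneg⟩
  set m : ℝ := sInf S with hm
  have hm0 : 0 ≤ m := le_csInf hSne hSnonneg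
  -- minimizing sequence
  have hseq : ∀ n : ℕ, ∃ z z' : ℝ → Pt, AdmissibleOn 0 tf z0 v0 zf vf z z' ∧
      maxCurvOn (Icc 0 tf) z' < m + 1 / (n + 1) := by
    intro n
    have hpos : (0:ℝ) < 1 / (n + 1) := by positivity
    obtain ⟨c, hcS, hc⟩ := exists_lt_of_csInf_lt hSne (by linarith : m < m + 1 / (n + 1))
    obtain ⟨z, z', hz, rfl⟩ := hcS
    exact ⟨z, z', hz, hc⟩
  choose zs zs' hadm hlt using hseq
  have hlip : ∀ n : ℕ, LipschitzOnWith (Real.toNNReal (maxCurvOn (Icc 0 tf) (zs' n)))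
      (zs' n) (Icc 0 tf) := fun n => (maxCurvOn_mem (hadm n).2.1).2
  have hcurv0 : ∀ n : ℕ, 0 ≤ maxCurvOn (Icc 0 tf) (zs' n) :=
    fun n => (maxCurvOn_mem (hadm n).2.1).1
  -- bundle restrictions to Icc as bounded continuous functions
  haveI : CompactSpace (Icc (0:ℝ) tf) := isCompact_iff_compactSpace.1 isCompact_Icc
  have h0I : (0:ℝ) ∈ Icc (0:ℝ) tf := ⟨le_refl 0, htf.le⟩
  have htfI : tf ∈ Icc (0:ℝ) tf := ⟨htf.le, le_refl tf⟩
  set K0 : NNReal := Real.toNNReal (m + 1) with hK0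
  have hlipK0 : ∀ n : ℕ, LipschitzOnWith K0 (zs' n) (Icc 0 tf) := by
    intro n
    rw [lipschitzOnWith_iff_dist_le_mul]
    intro x hx y hy
    have hd := lipschitzOnWith_iff_dist_le_mul.1 (hlip n) x hx y hy
    rw [Real.coe_toNNReal _ (hcurv0 n)] at hd
    have hc : maxCurvOn (Icc 0 tf) (zs' n) ≤ m + 1 := by
      have h1 : (1:ℝ) / (n + 1) ≤ 1 := by
        rw [div_le_one (by positivity)]; linarith [Nat.cast_nonneg (α := ℝ) n]
      linarith [(hlt n).le]
    rw [hK0, Real.coe_toNNReal _ (by linarith : (0:ℝ) ≤ m + 1)]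
    exact hd.trans (mul_le_mul_of_nonneg_right hc dist_nonneg)
  have hcont : ∀ n : ℕ, Continuous ((Icc (0:ℝ) tf).restrict (zs' n)) :=
    fun n => ((hlipK0 n).continuousOn).restrict
  set f : ℕ → BoundedContinuousFunction (Icc (0:ℝ) tf) Pt :=
    fun n => BoundedContinuousFunction.mkOfCompact ⟨(Icc (0:ℝ) tf).restrict (zs' n), hcont n⟩
    with hf
  have hfapp : ∀ n (x : Icc (0:ℝ) tf), f n x = zs' n x := fun n x => rfl
  -- the compact set of candidate limits
  set A : Set (BoundedContinuousFunction (Icc (0:ℝ) tf) Pt) :=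
    {F | LipschitzWith K0 F ∧ (∀ x, F x ∈ Metric.sphere (0:Pt) 1) ∧
      F ⟨0, h0I⟩ = v0 ∧ F ⟨tf, htfI⟩ = vf} with hA
  have hfA : ∀ n, f n ∈ A := by
    intro n
    refine ⟨?_, ?_, ?_, ?_⟩
    · rw [lipschitzWith_iff_dist_le_mul]
      intro x y
      rw [hfapp, hfapp, Subtype.dist_eq]
      exact lipschitzOnWith_iff_dist_le_mul.1 (hlipK0 n) x.1 x.2 y.1 y.2
    · intro x
      rw [hfapp, mem_sphere_zero_iff_norm]
      exact (hadm n).2.2.1 x x.2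
    · rw [hfapp]; exact (hadm n).2.2.2.2.2.1
    · rw [hfapp]; exact (hadm n).2.2.2.2.2.2
  have hAclosed : IsClosed A := by
    have c1 : IsClosed {F : BoundedContinuousFunction (Icc (0:ℝ) tf) Pt | LipschitzWith K0 F} := by
      have : {F : BoundedContinuousFunction (Icc (0:ℝ) tf) Pt | LipschitzWith K0 F} =
          ⋂ x, ⋂ y, {F | dist (F x) (F y) ≤ (K0 : ℝ) * dist x y} := by
        ext F
        simp only [mem_setOf_eq, mem_iInter, lipschitzWith_iff_dist_le_mul]
      rw [this]
      exact isClosed_iInter fun x => isClosed_iInter fun y =>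
        isClosed_le (Continuous.dist
          (continuous_eval_const x)
          (continuous_eval_const y)) continuous_const
    have c2 : IsClosed {F : BoundedContinuousFunction (Icc (0:ℝ) tf) Pt |
        ∀ x, F x ∈ Metric.sphere (0:Pt) 1} := by
      have : {F : BoundedContinuousFunction (Icc (0:ℝ) tf) Pt |
          ∀ x, F x ∈ Metric.sphere (0:Pt) 1} =
          ⋂ x, (fun F : BoundedContinuousFunction (Icc (0:ℝ) tf) Pt => F x) ⁻¹'
            (Metric.sphere (0:Pt) 1) := by
        ext F; simp [mem_iInter]
      rw [this]
      exact isClosed_iInter fun x =>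
        (Metric.isClosed_sphere).preimage (continuous_eval_const x)
    have c3 : IsClosed {F : BoundedContinuousFunction (Icc (0:ℝ) tf) Pt | F ⟨0, h0I⟩ = v0} :=
      isClosed_eq (continuous_eval_const _) continuous_const
    have c4 : IsClosed {F : BoundedContinuousFunction (Icc (0:ℝ) tf) Pt | F ⟨tf, htfI⟩ = vf} :=
      isClosed_eq (continuous_eval_const _) continuous_const
    exact ((c1.inter (c2.inter (c3.inter c4))))
  have hAcompact : IsCompact A := by
    refine BoundedContinuousFunction.arzela_ascoli₂ (Metric.sphere (0:Pt) 1)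
      (isCompact_sphere 0 1) A hAclosed (fun F x hF => hF.2.1 x) ?_
    refine Metric.equicontinuous_of_continuity_modulus (fun d => (K0:ℝ) * d) ?_ _ ?_
    · have hc : Continuous fun d : ℝ => (K0:ℝ) * d := continuous_const.mul continuous_id
      have := hc.tendsto 0
      simpa using this
    · rintro x y ⟨F, hF⟩
      exact lipschitzWith_iff_dist_le_mul.1 hF.1 x y
  obtain ⟨F, hFA, φ, hφ, hFtend⟩ := hAcompact.tendsto_subseq hfA
  -- pointwise convergence
  have hptwise : ∀ x : Icc (0:ℝ) tf,
      Filter.Tendsto (fun n => f (φ n) x) Filter.atTop (nhds (F x)) := fun x =>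
    ((continuous_eval_const x).tendsto F).comp hFtend
  -- Lipschitz bound m for F
  have hFlip : ∀ x y : Icc (0:ℝ) tf, dist (F x) (F y) ≤ m * dist x y := by
    intro x y
    have h1 : Filter.Tendsto (fun n => dist (f (φ n) x) (f (φ n) y)) Filter.atTop
        (nhds (dist (F x) (F y))) := (hptwise x).dist (hptwise y)
    have h2 : ∀ n, dist (f (φ n) x) (f (φ n) y) ≤ (m + 1 / (φ n + 1)) * dist x y := by
      intro n
      have hd := lipschitzOnWith_iff_dist_le_mul.1 (hlip (φ n)) x.1 x.2 y.1 y.2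
      rw [Real.coe_toNNReal _ (hcurv0 (φ n))] at hd
      rw [hfapp, hfapp, Subtype.dist_eq]
      refine hd.trans (mul_le_mul_of_nonneg_right (hlt (φ n)).le dist_nonneg)
    have h3 : Filter.Tendsto (fun n => (m + 1 / (φ n + 1)) * dist x y) Filter.atTop
        (nhds (m * dist x y)) := by
      have hto : Filter.Tendsto (fun n : ℕ => (1:ℝ) / (φ n + 1)) Filter.atTop (nhds 0) :=
        tendsto_one_div_add_atTop_nhds_zero_nat.comp hφ.tendsto_atTop
      have := ((tendsto_const_nhds (x := m)).add hto).mul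
        (tendsto_const_nhds (x := dist x y))
      simpa using this
    exact le_of_tendsto_of_tendsto h1 h3 (Filter.Eventually.of_forall h2)
  -- the limit derivative
  set g : ℝ → Pt := fun t => F (projIcc 0 tf htf.le t) with hgdef
  have hg_eq : ∀ t (ht : t ∈ Icc (0:ℝ) tf), g t = F ⟨t, ht⟩ := by
    intro t ht
    simp [hgdef, projIcc_of_mem htf.le ht]
  have hgcont : Continuous g := F.continuous.comp continuous_projIcc
  have hglip : LipschitzOnWith (Real.toNNReal m) g (Icc 0 tf) := by
    rw [lipschitzOnWith_iff_dist_le_mul]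
    intro x hx y hy
    rw [hg_eq x hx, hg_eq y hy, Real.coe_toNNReal _ hm0]
    have := hFlip ⟨x, hx⟩ ⟨y, hy⟩
    rwa [Subtype.dist_eq] at this
  -- integrals of the minimizing sequence
  have hint : ∀ n : ℕ, ∫ t in (0:ℝ)..tf, zs' n t = zf - z0 := by
    intro n
    have hcz : ContinuousOn (zs n) (Icc 0 tf) :=
      fun t ht => ((hadm n).1 t ht).continuousWithinAt
    have hderiv : ∀ t ∈ Ioo (0:ℝ) tf, HasDerivWithinAt (zs n) (zs' n t) (Ioi t) t := by
      intro t ht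
      have h1 := (hadm n).1 t (Ioo_subset_Icc_self ht)
      exact (h1.hasDerivAt (Icc_mem_nhds ht.1 ht.2)).hasDerivWithinAt
    have hintg : IntervalIntegrable (zs' n) volume 0 tf := by
      refine ContinuousOn.intervalIntegrable ?_
      rw [uIcc_of_le htf.le]
      exact (hlipK0 n).continuousOn
    have := intervalIntegral.integral_eq_sub_of_hasDeriv_right_of_le htf.le hcz hderiv hintg
    rw [this, (hadm n).2.2.2.1, (hadm n).2.2.2.2.1]
  -- integral of g
  have hgint : ∫ t in (0:ℝ)..tf, g t = zf - z0 := by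
    have hbound : ∀ n : ℕ, ‖(zf - z0) - ∫ t in (0:ℝ)..tf, g t‖ ≤ dist (f (φ n)) F * tf := by
      intro n
      have hintg1 : IntervalIntegrable (zs' (φ n)) volume 0 tf := by
        refine ContinuousOn.intervalIntegrable ?_
        rw [uIcc_of_le htf.le]
        exact (hlipK0 (φ n)).continuousOn
      have hintg2 : IntervalIntegrable g volume 0 tf := hgcont.intervalIntegrable 0 tf
      have heq : (zf - z0) - ∫ t in (0:ℝ)..tf, g t
          = ∫ t in (0:ℝ)..tf, (zs' (φ n) t - g t) := by
        rw [intervalIntegral.integral_sub hintg1 hintg2, hint (φ n)]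
      rw [heq]
      have := intervalIntegral.norm_integral_le_of_norm_le_const
        (C := dist (f (φ n)) F) (f := fun t => zs' (φ n) t - g t) (a := 0) (b := tf) ?_
      · calc ‖∫ t in (0:ℝ)..tf, (zs' (φ n) t - g t)‖
            ≤ dist (f (φ n)) F * |tf - 0| := this
          _ = dist (f (φ n)) F * tf := by rw [sub_zero, abs_of_pos htf]
      · intro t ht
        rw [uIoc_of_le htf.le] at ht
        have htI : t ∈ Icc (0:ℝ) tf := ⟨ht.1.le, ht.2⟩
        rw [← dist_eq_norm, hg_eq t htI, ← hfapp (φ n) ⟨t, htI⟩]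
        exact BoundedContinuousFunction.dist_coe_le_dist _
    have htend : Filter.Tendsto (fun n => dist (f (φ n)) F * tf) Filter.atTop (nhds 0) := by
      have h1 : Filter.Tendsto (fun n => dist (f (φ n)) F) Filter.atTop (nhds 0) :=
        tendsto_iff_dist_tendsto_zero.1 hFtend
      simpa using h1.mul (tendsto_const_nhds (x := tf))
    have : ‖(zf - z0) - ∫ t in (0:ℝ)..tf, g t‖ ≤ 0 :=
      le_of_tendsto_of_tendsto tendsto_const_nhds htend
        (Filter.Eventually.of_forall hbound)
    have h0 : (zf - z0) - ∫ t in (0:ℝ)..tf, g t = 0 :=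
      norm_le_zero_iff.1 this
    exact (sub_eq_zero.1 h0).symm
  -- construct the limit curve
  set Z : ℝ → Pt := fun t => z0 + ∫ s in (0:ℝ)..t, g s with hZ
  have hZderiv : ∀ t : ℝ, HasDerivAt Z (g t) t := by
    intro t
    exact ((hgcont.integral_hasStrictDerivAt 0 t).hasDerivAt).const_add z0
  have hZadm : AdmissibleOn 0 tf z0 v0 zf vf Z g := by
    refine ⟨fun t _ => (hZderiv t).hasDerivWithinAt, ⟨Real.toNNReal m, hglip⟩, ?_, ?_, ?_, ?_, ?_⟩
    · intro t ht
      rw [hg_eq t ht, ← mem_sphere_zero_iff_norm]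
      exact hFA.2.1 _
    · simp [hZ, intervalIntegral.integral_same]
    · simp [hZ, hgint]
    · rw [hg_eq 0 h0I]; exact hFA.2.2.1
    · rw [hg_eq tf htfI]; exact hFA.2.2.2
  refine ⟨Z, g, hZadm, ?_⟩
  intro w w' hw
  have h1 : maxCurvOn (Icc 0 tf) g ≤ m := by
    refine csInf_le ⟨0, fun a ha => ha.1⟩ ⟨hm0, hglip⟩
  have h2 : m ≤ maxCurvOn (Icc 0 tf) w' := csInf_le hSbdd ⟨w, w', hw, rfl⟩
  linarith
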